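/- Every Δ-generated topological space is homeomorphic to the disjoint union (topological sum) of its nonempty connected components; moreover its connected components coincide with its path-connected components. In particular a Δ-generated space is connected if and only if it is path-connected. -/

import Mathlib

/-- A topological space is Δ-generated if its topology is final with respect to all
continuous maps from the standard topological simplices `Δⁿ` into it. -/
def IsDeltaGenerated (X : Type*) [TopologicalSpace X] : Prop :=
  ∀ u : Set X, IsOpen u ↔
    ∀ (n : ℕ) (f : C((stdSimplex ℝ (Fin (n + 1)) : Set (Fin (n + 1) → ℝ)), X)),
      IsOpen (f ⁻¹' u)

/-- A convex subset of a real normed space is locally path-connected. -/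
lemma Convex.locPathConnectedSpace' {E : Type*} [NormedAddCommGroup E] [NormedSpace ℝ E]
    {s : Set E} (hs : Convex ℝ s) : LocPathConnectedSpace s := by
  refine LocPathConnectedSpace.of_bases
    (p := fun (x : s) (ε : ℝ) => 0 < ε)
    (s := fun (x : s) (ε : ℝ) => Subtype.val ⁻¹' Metric.ball (x : E) ε)
    (fun x => ?_) (fun x ε hε => ?_)
  · rw [nhds_subtype_eq_comap]
    exact (Metric.nhds_basis_ball).comap _
  · rw [Topology.IsInducing.subtypeVal.isPathConnected_iff, Subtype.image_preimage_val]
    exact (hs.inter (convex_ball (x : E) ε)).isPathConnected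
      ⟨x, x.2, Metric.mem_ball_self hε⟩

/-- A Δ-generated space is locally path-connected. -/
lemma IsDeltaGenerated.locPathConnectedSpace {X : Type*} [tX : TopologicalSpace X]
    (hX : IsDeltaGenerated X) : LocallyPathConnectedSpace X := by
  let T := (p : (n : ℕ) × C((stdSimplex ℝ (Fin (n + 1)) : Set (Fin (n + 1) → ℝ)), X)) ×
    (stdSimplex ℝ (Fin (p.1 + 1)) : Set (Fin (p.1 + 1) → ℝ))
  let F : T → X := fun x => x.1.2 x.2
  have hF : Continuous F := continuous_sigma fun p => p.2.continuous
  have hT : ∀ p : (n : ℕ) × C((stdSimplex ℝ (Fin (n + 1)) : Set (Fin (n + 1) → ℝ)), X),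
      LocallyPathConnectedSpace (stdSimplex ℝ (Fin (p.1 + 1)) : Set (Fin (p.1 + 1) → ℝ)) :=
    fun p => (convex_stdSimplex ℝ _).locPathConnectedSpace
  have : LocallyPathConnectedSpace T := Sigma.locPathConnectedSpace
  have heq : tX = TopologicalSpace.coinduced F inferInstance := by
    refine TopologicalSpace.ext_iff.mpr fun u => ?_
    rw [isOpen_coinduced]
    exact ⟨fun hu => isOpen_sigma_iff.mpr fun p => (hX u).mp hu p.1 p.2,
      fun h => (hX u).mpr fun n f => isOpen_sigma_iff.mp h ⟨n, f⟩⟩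
  rw [heq]
  exact LocPathConnectedSpace.coinduced F

/-- Every Δ-generated space is homeomorphic to the topological sum of its (nonempty)
connected components, and its connected components coincide with its path components. -/
theorem deltaGenerated_homeomorph_sigma_connectedComponents (X : Type*) [TopologicalSpace X]
    (hX : IsDeltaGenerated X) :
    (∀ x : X, connectedComponent x = pathComponent x) ∧
      Nonempty (X ≃ₜ (Σ c : ConnectedComponents X, {x : X // ConnectedComponents.mk x = c})) := by
  have := hX.locPathConnectedSpace
  refine ⟨fun x => (pathComponent_eq_connectedComponent x).symm, ⟨?_⟩⟩
  -- the equivalence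
  have hfiber : ∀ c : ConnectedComponents X,
      IsOpen {x : X | ConnectedComponents.mk x = c} := by
    intro c
    obtain ⟨x, rfl⟩ := ConnectedComponents.surjective_coe c
    have : {y : X | ConnectedComponents.mk y = ConnectedComponents.mk x} =
        connectedComponent x := by
      ext y
      simp [ConnectedComponents.coe_eq_coe, connectedComponent_eq_iff_mem]
    rw [this]
    exact isOpen_connectedComponent
  refine (Equiv.toHomeomorphOfContinuousOpen
    (Equiv.sigmaFiberEquiv (ConnectedComponents.mk : X → ConnectedComponents X)) ?_ ?_).symm
  · exact continuous_sigma fun c => continuous_subtype_val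
  · -- open map
    intro U hU
    rw [isOpen_sigma_iff] at hU
    have : (Equiv.sigmaFiberEquiv (ConnectedComponents.mk : X → ConnectedComponents X)) '' U =
        ⋃ c : ConnectedComponents X,
          Subtype.val '' {y : {x : X // ConnectedComponents.mk x = c} | Sigma.mk c y ∈ U} := by
      ext x
      simp only [Set.mem_image, Set.mem_iUnion, Set.mem_preimage]
      constructor
      · rintro ⟨⟨c, y⟩, hy, rfl⟩
        exact ⟨c, y, hy, rfl⟩
      · rintro ⟨c, y, hy, rfl⟩
        exact ⟨⟨c, y⟩, hy, rfl⟩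
    rw [this]
    refine isOpen_iUnion fun c => ?_
    exact (hfiber c).isOpenMap_subtype_val _ (hU c)
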